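/- Fix an integer $d \geq 2$, let $\omega = e^{2\pi i/d}$ and $a_l = \tfrac{1}{\sqrt{2}}\, e^{i\pi(2l-d)/(4d)}$ for $l = 1, \dots, d-1$. For any integers $\alpha_1, \alpha_2, \beta_1, \beta_2$ (deterministic outcomes of a local hidden variable strategy), define $\tilde{I}_d := \sum_{l=1}^{d-1} \big[ a_l\, \omega^{l(\alpha_1 - \beta_1)} + \overline{a_l}\, \omega^{l(1 + \alpha_1 - \beta_2)} + a_l\, \omega^{l(\alpha_2 - \beta_2)} + \overline{a_l}\, \omega^{l(\alpha_2 - \beta_1)} \big]$. Then $\tilde{I}_d$ is a real number and $\tilde{I}_d \leq \mathcal{C}_d := \tfrac{1}{2}\big[ 3 \cot\big(\tfrac{\pi}{4d}\big) - \cot\big(\tfrac{3\pi}{4d}\big) \big] - 2$. -/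

import Mathlib

open Complex

section SatwapAux

open Real

lemma cot_decr' {a b : ℝ} (h0 : 0 < a) (hab : a ≤ b) (hb : b < π) :
    Real.cot b ≤ Real.cot a := by
  have hsa : 0 < Real.sin a := Real.sin_pos_of_pos_of_lt_pi h0 (lt_of_le_of_lt hab hb)
  have hsb : 0 < Real.sin b := Real.sin_pos_of_pos_of_lt_pi (lt_of_lt_of_le h0 hab) hb
  have hs : 0 ≤ Real.sin (b - a) :=
    Real.sin_nonneg_of_nonneg_of_le_pi (by linarith) (by linarith)
  rw [Real.sin_sub] at hs
  rw [Real.cot_eq_cos_div_sin, Real.cot_eq_cos_div_sin, div_le_div_iff₀ hsb hsa]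
  nlinarith

lemma cot_nonneg' {a : ℝ} (h0 : 0 < a) (ha : a ≤ π/2) : 0 ≤ Real.cot a := by
  rw [Real.cot_eq_cos_div_sin]
  have := Real.pi_pos
  exact div_nonneg (Real.cos_nonneg_of_mem_Icc ⟨by linarith, ha⟩)
    (Real.sin_nonneg_of_nonneg_of_le_pi (le_of_lt h0) (by linarith))

/-- cot sum formula -/
lemma cot_add_cot {a b : ℝ} (ha : 0 < a) (ha' : a < π) (hb : 0 < b) (hb' : b < π) :
    Real.cot a + Real.cot b = Real.sin (a + b) / (Real.sin a * Real.sin b) := by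
  have hsa : Real.sin a ≠ 0 := (Real.sin_pos_of_pos_of_lt_pi ha ha').ne'
  have hsb : Real.sin b ≠ 0 := (Real.sin_pos_of_pos_of_lt_pi hb hb').ne'
  rw [Real.cot_eq_cos_div_sin, Real.cot_eq_cos_div_sin, Real.sin_add]
  field_simp
  ring

/-- exchange lemma -/
lemma cot_exchange {c a b : ℝ} (hc : 0 < c) (hca : c ≤ a) (hcb : c ≤ b)
    (hab : a + b ≤ π) :
    Real.cot a + Real.cot b ≤ Real.cot c + Real.cot (a + b - c) := by
  have hpi := Real.pi_pos
  have ha' : a < π := by linarith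
  have hb' : b < π := by linarith
  have hc' : c < π := by linarith
  have hd : 0 < a + b - c := by linarith
  have hd' : a + b - c < π := by linarith
  rw [cot_add_cot (by linarith) ha' (by linarith) hb',
    cot_add_cot hc hc' hd hd']
  have he : c + (a + b - c) = a + b := by ring
  rw [he]
  have hsnum : 0 ≤ Real.sin (a + b) :=
    Real.sin_nonneg_of_nonneg_of_le_pi (by linarith) hab
  have h1 : 0 < Real.sin c * Real.sin (a + b - c) :=
    mul_pos (Real.sin_pos_of_pos_of_lt_pi hc hc') (Real.sin_pos_of_pos_of_lt_pi hd hd')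
  have h2 : Real.sin c * Real.sin (a + b - c) ≤ Real.sin a * Real.sin b := by
    have e1 : Real.cos (a - b) - Real.cos (a + b) = 2 * (Real.sin a * Real.sin b) := by
      rw [Real.cos_sub_cos, show ((a-b)+(a+b))/2 = a by ring,
        show ((a-b)-(a+b))/2 = -b by ring, Real.sin_neg]; ring
    have e2 : Real.cos (a + b - 2*c) - Real.cos (a + b) =
        2 * (Real.sin c * Real.sin (a + b - c)) := by
      rw [Real.cos_sub_cos, show ((a+b-2*c)+(a+b))/2 = a+b-c by ring,
        show ((a+b-2*c)-(a+b))/2 = -c by ring, Real.sin_neg]; ring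
    have e3 : Real.cos (a + b - 2*c) ≤ Real.cos (a - b) := by
      rw [← Real.cos_abs (a - b)]
      apply Real.cos_le_cos_of_nonneg_of_le_pi (abs_nonneg _) (by linarith)
      rw [abs_le]; constructor <;> linarith
    linarith
  exact div_le_div_of_nonneg_left hsnum h1 h2

lemma cot_pair_nonpos {a b : ℝ} (ha : 0 < a) (ha' : a < π) (hb : 0 < b) (hb' : b < π)
    (hab : π ≤ a + b) : Real.cot a + Real.cot b ≤ 0 := by
  rw [cot_add_cot ha ha' hb hb']
  apply div_nonpos_of_nonpos_of_nonneg
  · have : Real.sin (a + b) = - Real.sin (a + b - π) := by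
      rw [show a + b = (a + b - π) + π by ring, Real.sin_add_pi]; ring_nf
    rw [this, neg_nonpos]
    exact Real.sin_nonneg_of_nonneg_of_le_pi (by linarith) (by linarith)
  · exact (mul_pos (Real.sin_pos_of_pos_of_lt_pi ha ha')
      (Real.sin_pos_of_pos_of_lt_pi hb hb')).le

lemma cot_pi_sub' (x : ℝ) : Real.cot (π - x) = - Real.cot x := by
  rw [Real.cot_eq_cos_div_sin, Real.cot_eq_cos_div_sin, Real.cos_pi_sub, Real.sin_pi_sub,
    neg_div]

lemma cot_add_int_pi (x : ℝ) (n : ℤ) : Real.cot (x + n * π) = Real.cot x := by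
  rw [Real.cot_eq_cos_div_sin, Real.cot_eq_cos_div_sin, Real.sin_add_int_mul_pi,
    Real.cos_add_int_mul_pi]
  rcases Int.even_or_odd n with h | h
  · rw [h.neg_one_zpow]; simp
  · rw [Odd.neg_one_zpow h]; simp [neg_div_neg_eq]

lemma four_angle {c : ℝ} (hc : 0 < c) (hc8 : c ≤ π/8) {t : ℤ} (ht1 : 1 ≤ t) (ht3 : t ≤ 3)
    {p q r s : ℝ} (hp : c ≤ p) (hq : c ≤ q) (hr : c ≤ r) (hs : c ≤ s)
    (hp' : p ≤ π - 3*c) (hq' : q ≤ π - 3*c) (hr' : r ≤ π - 3*c) (hs' : s ≤ π - 3*c)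
    (hsum : p + q + r + s = t * π) :
    Real.cot p + Real.cot q + Real.cot r + Real.cot s
      ≤ 3 * Real.cot c - Real.cot (3*c) := by
  have hpi := Real.pi_pos
  have hcp : c < π := by linarith
  have h3c : Real.cot (3*c) ≤ Real.cot c := cot_decr' hc (by linarith) (by linarith)
  have hcnn : 0 ≤ Real.cot c := cot_nonneg' hc (by linarith)
  have hpp : 0 < p := lt_of_lt_of_le hc hp
  have hqp : 0 < q := lt_of_lt_of_le hc hq
  have hrp : 0 < r := lt_of_lt_of_le hc hr
  have hsp : 0 < s := lt_of_lt_of_le hc hs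
  have hpl : p < π := by linarith
  have hql : q < π := by linarith
  have hrl : r < π := by linarith
  have hsl : s < π := by linarith
  interval_cases t
  · -- t = 1
    norm_num at hsum
    have e1 : Real.cot p + Real.cot q ≤ Real.cot c + Real.cot (p + q - c) :=
      cot_exchange hc hp hq (by linarith)
    have e2 : Real.cot (p + q - c) + Real.cot r ≤ Real.cot c + Real.cot (p + q + r - 2*c) := by
      have := cot_exchange hc (a := p + q - c) (b := r) (by linarith) hr (by linarith)
      rw [show p + q - c + r - c = p + q + r - 2*c by ring] at this
      exact this
    have e3 : Real.cot (p + q + r - 2*c) + Real.cot s ≤ Real.cot c + Real.cot (π - 3*c) := by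
      have := cot_exchange hc (a := p + q + r - 2*c) (b := s) (by linarith) hs (by linarith)
      rw [show p + q + r - 2*c + s - c = π - 3*c by linarith] at this
      exact this
    rw [cot_pi_sub'] at e3
    linarith
  · -- t = 2
    norm_num at hsum
    rcases le_or_gt (p + q) π with h | h
    · have n1 : Real.cot r + Real.cot s ≤ 0 :=
        cot_pair_nonpos hrp hrl hsp hsl (by linarith)
      have e1 : Real.cot p + Real.cot q ≤ Real.cot c + Real.cot (p + q - c) :=
        cot_exchange hc hp hq h
      have e2 : Real.cot (p + q - c) ≤ Real.cot c :=
        cot_decr' hc (by linarith) (by linarith)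
      linarith
    · have n1 : Real.cot p + Real.cot q ≤ 0 :=
        cot_pair_nonpos hpp hpl hqp hql h.le
      have e1 : Real.cot r + Real.cot s ≤ Real.cot c + Real.cot (r + s - c) :=
        cot_exchange hc hr hs (by linarith)
      have e2 : Real.cot (r + s - c) ≤ Real.cot c :=
        cot_decr' hc (by linarith) (by linarith)
      linarith
  · -- t = 3
    norm_num at hsum
    have n1 : Real.cot p + Real.cot q ≤ 0 :=
      cot_pair_nonpos hpp hpl hqp hql (by linarith)
    have n2 : Real.cot r + Real.cot s ≤ 0 :=
      cot_pair_nonpos hrp hrl hsp hsl (by linarith)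
    linarith

lemma core_ineq (d : ℕ) (hd : 2 ≤ d) (u₁ u₂ u₃ u₄ : ℤ)
    (h₁ : u₁ % 4 = 1) (h₂ : u₂ % 4 = 1) (h₃ : u₃ % 4 = 1) (h₄ : u₄ % 4 = 1)
    (hsum : u₁ + u₂ + u₃ + u₄ = 0) :
    Real.cot (π * u₁ / (4*d)) + Real.cot (π * u₂ / (4*d)) +
    Real.cot (π * u₃ / (4*d)) + Real.cot (π * u₄ / (4*d))
      ≤ 3 * Real.cot (π / (4*d)) - Real.cot (3*π / (4*d)) := by
  have hpi := Real.pi_pos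
  have hdR : (0:ℝ) < (d:ℝ) := by positivity
  have hd2R : (2:ℝ) ≤ (d:ℝ) := by exact_mod_cast hd
  set D : ℤ := 4 * d with hD
  have hDpos : 0 < D := by positivity
  have hD8 : 8 ≤ D := by omega
  have key : ∀ u : ℤ, u % 4 = 1 →
      Real.cot (π * u / (4*d)) = Real.cot (π * ((u % D : ℤ) : ℝ) / (4*d)) ∧
      1 ≤ u % D ∧ u % D ≤ D - 3 := by
    intro u hu
    have h0 : 0 ≤ u % D := Int.emod_nonneg u hDpos.ne'
    have h1 : u % D < D := Int.emod_lt_of_pos u hDpos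
    have h4 : (u % D) % 4 = 1 := by
      rw [Int.emod_emod_of_dvd u ⟨d, by ring⟩]; exact hu
    have hDm : D % 4 = 0 := by omega
    refine ⟨?_, by omega, by omega⟩
    have hu' : u = D * (u / D) + u % D := (Int.mul_ediv_add_emod u D).symm
    have hcast : (u:ℝ) = 4*(d:ℝ)*((u / D : ℤ):ℝ) + ((u % D : ℤ):ℝ) := by
      exact_mod_cast congrArg (fun z : ℤ => (z : ℝ)) hu'
    have harg : π * (u:ℝ) / (4*(d:ℝ)) =
        π * ((u % D : ℤ):ℝ)/(4*(d:ℝ)) + ((u / D : ℤ):ℝ)*π := by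
      field_simp
      linear_combination hcast
    rw [harg, cot_add_int_pi]
  obtain ⟨e₁, l₁, m₁⟩ := key u₁ h₁
  obtain ⟨e₂, l₂, m₂⟩ := key u₂ h₂
  obtain ⟨e₃, l₃, m₃⟩ := key u₃ h₃
  obtain ⟨e₄, l₄, m₄⟩ := key u₄ h₄
  rw [e₁, e₂, e₃, e₄]
  set r₁ := u₁ % D; set r₂ := u₂ % D; set r₃ := u₃ % D; set r₄ := u₄ % D
  have hdvd : D ∣ (r₁ + r₂ + r₃ + r₄) := by
    have hq : r₁ + r₂ + r₃ + r₄ =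
        (u₁ + u₂ + u₃ + u₄) - D * (u₁/D + u₂/D + u₃/D + u₄/D) := by
      have q1 := Int.mul_ediv_add_emod u₁ D
      have q2 := Int.mul_ediv_add_emod u₂ D
      have q3 := Int.mul_ediv_add_emod u₃ D
      have q4 := Int.mul_ediv_add_emod u₄ D
      simp only [r₁, r₂, r₃, r₄]
      linarith
    rw [hq, hsum]
    exact ⟨-(u₁/D + u₂/D + u₃/D + u₄/D), by ring⟩
  obtain ⟨T, hT⟩ := hdvd
  have hT1 : 1 ≤ T := by
    by_contra h
    push_neg at h
    have hT0 : T ≤ 0 := by omega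
    have : D * T ≤ 0 := mul_nonpos_iff.mpr (Or.inl ⟨hDpos.le, hT0⟩)
    omega
  have hT3 : T ≤ 3 := by
    by_contra h
    push_neg at h
    have : D * 4 ≤ D * T := mul_le_mul_of_nonneg_left (by omega) hDpos.le
    omega
  set c : ℝ := π / (4*d) with hc
  have hcpos : 0 < c := by positivity
  have hc8 : c ≤ π / 8 := by
    have h84 : (8:ℝ) ≤ 4*(d:ℝ) := by linarith
    rw [hc]
    gcongr
  have hang : ∀ r : ℤ, 1 ≤ r → r ≤ D - 3 →
      c ≤ π * (r:ℝ) / (4*d) ∧ π * (r:ℝ) / (4*d) ≤ π - 3*c := by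
    intro r hr1 hr2
    have hr1' : (1:ℝ) ≤ (r:ℝ) := by exact_mod_cast hr1
    have hr2' : (r:ℝ) ≤ 4*(d:ℝ) - 3 := by
      have h := congrArg (fun z : ℤ => (z:ℝ)) (min_eq_left hr2)
      have : (r:ℝ) ≤ ((D:ℤ):ℝ) - 3 := by exact_mod_cast hr2
      push_cast [hD] at this
      linarith
    constructor
    · rw [hc, show π/(4*(d:ℝ)) = π*1/(4*(d:ℝ)) by ring]
      gcongr
    · have hub : π - 3*c = π*(4*(d:ℝ)-3)/(4*(d:ℝ)) := by
        rw [hc]; field_simp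
      rw [hub]
      gcongr
  obtain ⟨a₁, b₁⟩ := hang r₁ l₁ m₁
  obtain ⟨a₂, b₂⟩ := hang r₂ l₂ m₂
  obtain ⟨a₃, b₃⟩ := hang r₃ l₃ m₃
  obtain ⟨a₄, b₄⟩ := hang r₄ l₄ m₄
  have hrT : ((r₁:ℝ) + r₂ + r₃ + r₄) = 4*(d:ℝ)*(T:ℝ) := by
    have : ((r₁ + r₂ + r₃ + r₄ : ℤ) : ℝ) = ((D * T : ℤ) : ℝ) := by exact_mod_cast hT
    push_cast [hD] at this
    linarith
  have hsum' : π * (r₁:ℝ) / (4*d) + π * (r₂:ℝ) / (4*d) + π * (r₃:ℝ) / (4*d)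
      + π * (r₄:ℝ) / (4*d) = T * π := by
    field_simp
    linear_combination hrT
  have h3c : 3 * π / (4*(d:ℝ)) = 3 * c := by rw [hc]; ring
  rw [h3c]
  exact four_angle hcpos hc8 hT1 hT3 a₁ a₂ a₃ a₄ b₁ b₂ b₃ b₄ hsum'

lemma key_id (θ : ℝ) (hs : Real.sin θ ≠ 0) :
    (((Real.cot θ - 1)/2 : ℝ) : ℂ) * (Complex.exp (((2*θ : ℝ) : ℂ) * Complex.I) - 1)
      = (1 - Complex.I)/2 * (Complex.I - Complex.exp (((2*θ : ℝ) : ℂ) * Complex.I)) := by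
  have hsC : ((Real.sin θ : ℝ) : ℂ) ≠ 0 := Complex.ofReal_ne_zero.mpr hs
  have main : ((Real.cos θ - Real.sin θ : ℝ) : ℂ) *
        (Complex.exp (((2*θ : ℝ) : ℂ) * Complex.I) - 1)
      = (1 - Complex.I) * (Complex.I - Complex.exp (((2*θ : ℝ) : ℂ) * Complex.I)) *
        ((Real.sin θ : ℝ) : ℂ) := by
    rw [Complex.exp_mul_I, ← Complex.ofReal_cos, ← Complex.ofReal_sin,
      Real.cos_two_mul', Real.sin_two_mul]
    apply Complex.ext
    · simp only [Complex.mul_re, Complex.mul_im, Complex.add_re, Complex.add_im,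
        Complex.sub_re, Complex.sub_im, Complex.ofReal_re, Complex.ofReal_im,
        Complex.I_re, Complex.I_im, Complex.one_re, Complex.one_im]
      linear_combination Real.cos θ * Real.sin_sq_add_cos_sq θ
    · simp only [Complex.mul_re, Complex.mul_im, Complex.add_re, Complex.add_im,
        Complex.sub_re, Complex.sub_im, Complex.ofReal_re, Complex.ofReal_im,
        Complex.I_re, Complex.I_im, Complex.one_re, Complex.one_im]
      linear_combination (Real.sin θ) * Real.sin_sq_add_cos_sq θ
  have hrw : (((Real.cot θ - 1)/2 : ℝ) : ℂ)
      = ((Real.cos θ - Real.sin θ : ℝ) : ℂ) / (2 * ((Real.sin θ : ℝ) : ℂ)) := by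
    have hs2 : Complex.sin (θ:ℂ) ≠ 0 := by rw [← Complex.ofReal_sin]; exact hsC
    rw [Real.cot_eq_cos_div_sin]
    push_cast
    field_simp
  rw [hrw, div_mul_eq_mul_div, div_eq_iff (by simpa using hsC : (2 * ((Real.sin θ:ℝ):ℂ)) ≠ 0)]
  linear_combination main

lemma sum_eval (d : ℕ) (hd : 2 ≤ d) (k : ℤ) :
    (∑ l ∈ Finset.Icc 1 (d-1), (1 / (Real.sqrt 2 : ℂ)) *
      Complex.exp (Complex.I * (Real.pi : ℂ) * (2 * (l : ℂ) - (d : ℂ)) / (4 * d)) *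
      Complex.exp (2 * (Real.pi : ℂ) * Complex.I / d) ^ ((l : ℤ) * k))
    = (((Real.cot (Real.pi * (4*(k:ℝ)+1) / (4*(d:ℝ))) - 1)/2 : ℝ) : ℂ) := by
  have hd0 : (d:ℂ) ≠ 0 := by
    exact Nat.cast_ne_zero.mpr (by omega : d ≠ 0)
  have hpi := Real.pi_pos
  set θ : ℝ := Real.pi * (4*(k:ℝ)+1) / (4*(d:ℝ)) with hθ
  have hθC : (θ : ℂ) = (Real.pi : ℂ) * (4*(k:ℂ)+1) / (4*(d:ℂ)) := by
    rw [hθ]; push_cast; ring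
  set q : ℂ := Complex.exp (((2*θ : ℝ) : ℂ) * Complex.I) with hq
  -- sin θ ≠ 0
  have hsin : Real.sin θ ≠ 0 := by
    intro h
    obtain ⟨n, hn⟩ := Real.sin_eq_zero_iff.mp h
    rw [hθ] at hn
    have hdR : (0:ℝ) < (d:ℝ) := by positivity
    have : (n:ℝ) * (4*(d:ℝ)) = 4*(k:ℝ)+1 := by
      have hπ : Real.pi ≠ 0 := ne_of_gt hpi
      field_simp at hn
      nlinarith [hn]
    have hZ : (n * (4*(d:ℤ)) : ℤ) = 4*k+1 := by exact_mod_cast this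
    have h4 : (4:ℤ) ∣ 4*k+1 := ⟨n*d, by linarith⟩
    omega
  -- q^d = I
  have hqd : q ^ d = Complex.I := by
    rw [hq, ← Complex.exp_nat_mul]
    have harg : (d:ℂ) * (((2*θ : ℝ) : ℂ) * Complex.I)
        = (k:ℂ) * (2 * (Real.pi:ℂ) * Complex.I) + ((Real.pi/2 : ℝ) : ℂ) * Complex.I := by
      push_cast [hθ]
      field_simp
      ring
    rw [harg, Complex.exp_add, Complex.exp_int_mul_two_pi_mul_I, one_mul,
      Complex.exp_mul_I, ← Complex.ofReal_cos, ← Complex.ofReal_sin,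
      Real.cos_pi_div_two, Real.sin_pi_div_two]
    simp
  -- q ≠ 1
  have hq1 : q ≠ 1 := by
    intro h
    obtain ⟨n, hn⟩ := Complex.exp_eq_one_iff.mp (hq ▸ h)
    have h2 : (((2*θ:ℝ)):ℂ) * Complex.I = ((n:ℂ) * (2*(Real.pi:ℂ))) * Complex.I := by
      rw [hn]; ring
    have h3 := mul_right_cancel₀ Complex.I_ne_zero h2
    have h4 : (2*θ : ℝ) = n * (2*Real.pi) := by exact_mod_cast h3
    rw [hθ] at h4
    have hdR : (0:ℝ) < (d:ℝ) := by positivity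
    have h5 : (4*(k:ℝ)+1) = (n:ℝ) * (4*(d:ℝ)) := by
      have hπ : Real.pi ≠ 0 := ne_of_gt hpi
      field_simp at h4
      nlinarith [h4]
    have hZ : (4*k+1 : ℤ) = n * (4*d) := by exact_mod_cast h5
    have h6 : (4:ℤ) ∣ 4*k+1 := ⟨n*d, by linarith⟩
    omega
  -- termwise identity
  have hterm : ∀ l ∈ Finset.Icc 1 (d-1),
      (1 / (Real.sqrt 2 : ℂ)) *
        Complex.exp (Complex.I * (Real.pi : ℂ) * (2 * (l : ℂ) - (d : ℂ)) / (4 * d)) *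
        Complex.exp (2 * (Real.pi : ℂ) * Complex.I / d) ^ ((l : ℤ) * k)
      = (1 - Complex.I)/2 * q ^ l := by
    intro l _
    rw [← Complex.exp_int_mul, hq, ← Complex.exp_nat_mul, mul_assoc, ← Complex.exp_add]
    have hsplit : Complex.I * (Real.pi : ℂ) * (2 * (l : ℂ) - (d : ℂ)) / (4 * d)
        + ((((l:ℤ) * k : ℤ)) : ℂ) * (2 * (Real.pi : ℂ) * Complex.I / d)
        = ((-(Real.pi/4) : ℝ) : ℂ) * Complex.I + (l:ℂ) * (((2*θ : ℝ) : ℂ) * Complex.I) := by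
      push_cast [hθ]
      field_simp
      ring
    rw [hsplit, Complex.exp_add, Complex.exp_mul_I, ← Complex.ofReal_cos, ← Complex.ofReal_sin,
      Real.cos_neg, Real.sin_neg, Real.cos_pi_div_four, Real.sin_pi_div_four]
    have hs2 : (Real.sqrt 2 : ℂ) ≠ 0 := by
      simpa using Real.sqrt_ne_zero'.mpr (by norm_num : (0:ℝ) < 2)
    have hs2sq : (Real.sqrt 2 : ℂ) * (Real.sqrt 2 : ℂ) = 2 := by
      rw [← Complex.ofReal_mul, Real.mul_self_sqrt (by norm_num : (0:ℝ) ≤ 2)]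
      norm_num
    field_simp
    push_cast
    ring
  rw [Finset.sum_congr rfl hterm, ← Finset.mul_sum]
  have hIcc : Finset.Icc 1 (d-1) = Finset.Ico 1 d := by
    ext x; simp [Finset.mem_Icc, Finset.mem_Ico]; omega
  rw [hIcc, geom_sum_Ico hq1 (by omega : 1 ≤ d), hqd, pow_one]
  have hkey := key_id θ hsin
  rw [← hq] at hkey
  have hq1' : q - 1 ≠ 0 := sub_ne_zero.mpr hq1
  rw [← mul_div_assoc, div_eq_iff hq1']
  linear_combination -hkey

lemma sum_eval_conj (d : ℕ) (hd : 2 ≤ d) (k : ℤ) :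
    (∑ l ∈ Finset.Icc 1 (d-1), (starRingEnd ℂ) ((1 / (Real.sqrt 2 : ℂ)) *
      Complex.exp (Complex.I * (Real.pi : ℂ) * (2 * (l : ℂ) - (d : ℂ)) / (4 * d))) *
      Complex.exp (2 * (Real.pi : ℂ) * Complex.I / d) ^ ((l : ℤ) * k))
    = (((Real.cot (Real.pi * (4*((-k : ℤ):ℝ)+1) / (4*(d:ℝ))) - 1)/2 : ℝ) : ℂ) := by
  have hconj : (starRingEnd ℂ) (Complex.exp (2 * (Real.pi : ℂ) * Complex.I / d))
      = (Complex.exp (2 * (Real.pi : ℂ) * Complex.I / d))⁻¹ := by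
    rw [← Complex.exp_conj, ← Complex.exp_neg]
    congr 1
    simp [map_div₀, map_mul, Complex.conj_I, Complex.conj_ofReal, map_ofNat]
    ring
  have hstep : (∑ l ∈ Finset.Icc 1 (d-1), (starRingEnd ℂ) ((1 / (Real.sqrt 2 : ℂ)) *
      Complex.exp (Complex.I * (Real.pi : ℂ) * (2 * (l : ℂ) - (d : ℂ)) / (4 * d))) *
      Complex.exp (2 * (Real.pi : ℂ) * Complex.I / d) ^ ((l : ℤ) * k))
      = (starRingEnd ℂ) (∑ l ∈ Finset.Icc 1 (d-1), (1 / (Real.sqrt 2 : ℂ)) *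
      Complex.exp (Complex.I * (Real.pi : ℂ) * (2 * (l : ℂ) - (d : ℂ)) / (4 * d)) *
      Complex.exp (2 * (Real.pi : ℂ) * Complex.I / d) ^ ((l : ℤ) * (-k))) := by
    rw [map_sum]
    apply Finset.sum_congr rfl
    intro l _
    conv_rhs => rw [map_mul, map_zpow₀, hconj, inv_zpow, ← zpow_neg]
    rw [map_mul]
    congr 1
    congr 1
    ring
  rw [hstep, sum_eval d hd (-k), Complex.conj_ofReal]

end SatwapAux

/-- The two-setting SATWAP Bell expression, evaluated on any deterministic
local-hidden-variable strategy with integer outcomes `α₁, α₂, β₁, β₂`, is a real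
number bounded by the classical bound
`C_d = (3 cot(π/4d) - cot(3π/4d))/2 - 2`. -/
theorem satwap_classical_bound (d : ℕ) (hd : 2 ≤ d) (α₁ α₂ β₁ β₂ : ℤ) :
    let ω : ℂ := Complex.exp (2 * (Real.pi : ℂ) * Complex.I / d)
    let a : ℕ → ℂ := fun l => (1 / (Real.sqrt 2 : ℂ)) *
      Complex.exp (Complex.I * (Real.pi : ℂ) * (2 * (l : ℂ) - (d : ℂ)) / (4 * d))
    let Itilde : ℂ := ∑ l ∈ Finset.Icc 1 (d - 1),
      (a l * ω ^ ((l : ℤ) * (α₁ - β₁)) +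
       (starRingEnd ℂ) (a l) * ω ^ ((l : ℤ) * (1 + α₁ - β₂)) +
       a l * ω ^ ((l : ℤ) * (α₂ - β₂)) +
       (starRingEnd ℂ) (a l) * ω ^ ((l : ℤ) * (α₂ - β₁)))
    Itilde.im = 0 ∧
    Itilde.re ≤ (3 * Real.cot (Real.pi / (4 * d)) -
      Real.cot (3 * Real.pi / (4 * d))) / 2 - 2 := by
  intro ω a Itilde
  set G : ℤ → ℝ := fun u => (Real.cot (Real.pi * (u:ℝ) / (4*(d:ℝ))) - 1)/2 with hG
  have cast1 : ∀ k : ℤ, Real.pi * (4*(k:ℝ)+1) / (4*(d:ℝ))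
      = Real.pi * ((4*k+1 : ℤ):ℝ) / (4*(d:ℝ)) := by
    intro k; push_cast; ring
  have cast2 : ∀ k : ℤ, Real.pi * (4*((-k : ℤ):ℝ)+1) / (4*(d:ℝ))
      = Real.pi * ((1-4*k : ℤ):ℝ) / (4*(d:ℝ)) := by
    intro k; push_cast; ring
  have h1 := sum_eval d hd (α₁ - β₁)
  have h2 := sum_eval_conj d hd (1 + α₁ - β₂)
  have h3 := sum_eval d hd (α₂ - β₂)
  have h4 := sum_eval_conj d hd (α₂ - β₁)
  rw [cast1] at h1 h3
  rw [cast2] at h2 h4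
  have hI : Itilde = ((G (4*(α₁-β₁)+1) + G (1-4*(1+α₁-β₂)) + G (4*(α₂-β₂)+1)
      + G (1-4*(α₂-β₁)) : ℝ) : ℂ) := by
    have hsplit : Itilde =
        (∑ l ∈ Finset.Icc 1 (d-1), a l * ω ^ ((l : ℤ) * (α₁ - β₁))) +
        (∑ l ∈ Finset.Icc 1 (d-1), (starRingEnd ℂ) (a l) * ω ^ ((l : ℤ) * (1 + α₁ - β₂))) +
        (∑ l ∈ Finset.Icc 1 (d-1), a l * ω ^ ((l : ℤ) * (α₂ - β₂))) +
        (∑ l ∈ Finset.Icc 1 (d-1), (starRingEnd ℂ) (a l) * ω ^ ((l : ℤ) * (α₂ - β₁))) := by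
      simp only [Itilde, Finset.sum_add_distrib]
    rw [hsplit]
    simp only [ω, a, hG]
    rw [h1, h2, h3, h4]
    rw [Complex.ofReal_add, Complex.ofReal_add, Complex.ofReal_add]
  constructor
  · rw [hI]; exact Complex.ofReal_im _
  · rw [hI, Complex.ofReal_re]
    have hcore := core_ineq d hd (4*(α₁-β₁)+1) (1-4*(1+α₁-β₂)) (4*(α₂-β₂)+1) (1-4*(α₂-β₁))
      (by omega) (by omega) (by omega) (by omega) (by ring)
    simp only [hG]
    rw [show (3*Real.pi) / (4*(d:ℝ)) = 3*(Real.pi / (4*(d:ℝ))) from by ring] at hcore ⊢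
    linarith
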